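/- Let n ≥ 3 and let β be a bivariate truncated moment sequence of degree 2n whose moment matrix M(n) is positive semidefinite and p-pure, where p(x,y) = y² − x³ − ax − b. Fix arbitrary θ, φ, ψ ∈ ℝ and extend β to degree 2n+1 as in the context. Then for every s, t ≥ 0 with s + t = n + 1, the column vector C_{s,t} := (β_{s+i, t+j})_{i,j ≥ 0, i+j ≤ n} (indexed by the monomials x^i y^j with i+j ≤ n in degree-lexicographic order) lies in the column space of M(n). -/

import Mathlib

open MeasureTheory Matrix

noncomputable section

/-- Index type for monomials `x^i y^j` with `i + j ≤ n`. -/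
abbrev MIdx (n : ℕ) : Type := {p : Fin (n+1) × Fin (n+1) // (p.1 : ℕ) + (p.2 : ℕ) ≤ n}

/-- The moment matrix `M(n)` of a bivariate truncated moment sequence `β`. -/
def momentMatrix (n : ℕ) (β : ℕ → ℕ → ℝ) : Matrix (MIdx n) (MIdx n) ℝ :=
  fun p q => β ((p.1.1 : ℕ) + (q.1.1 : ℕ)) ((p.1.2 : ℕ) + (q.1.2 : ℕ))

/-- Coefficient vector (w.r.t. monomials of degree ≤ n) of `x^i y^j * (y² - x³ - a x - b)`. -/
def pureVec (n : ℕ) (a b : ℝ) (i j : ℕ) : MIdx n → ℝ := fun q =>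
  (if (q.1.1 : ℕ) = i ∧ (q.1.2 : ℕ) = j + 2 then (1:ℝ) else 0)
    - (if (q.1.1 : ℕ) = i + 3 ∧ (q.1.2 : ℕ) = j then (1:ℝ) else 0)
    - a * (if (q.1.1 : ℕ) = i + 1 ∧ (q.1.2 : ℕ) = j then (1:ℝ) else 0)
    - b * (if (q.1.1 : ℕ) = i ∧ (q.1.2 : ℕ) = j then (1:ℝ) else 0)

/-- `M(n)` is `p`-pure for `p(x,y) = y² - x³ - a x - b`: the kernel of `M(n)` is spanned by
the coefficient vectors of `x^i y^j p(x,y)`, `i + j ≤ n - 3`. -/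
def IsPPure (n : ℕ) (a b : ℝ) (β : ℕ → ℕ → ℝ) : Prop :=
  {v : MIdx n → ℝ | (momentMatrix n β).mulVec v = 0} =
    (Submodule.span ℝ {v : MIdx n → ℝ | ∃ i j : ℕ, i + j + 3 ≤ n ∧ v = pureVec n a b i j} :
      Set (MIdx n → ℝ))

/-- Extension of `β` to degree `2n+1`: degree `2n+1` moments with first index `≥ 3` are
determined recursively; `θ = β_{2,2n-1}`, `φ = β_{1,2n}`, `ψ = β_{0,2n+1}` are parameters. -/
def betaExt (n : ℕ) (a b : ℝ) (β : ℕ → ℕ → ℝ) (θ φ ψ : ℝ) : ℕ → ℕ → ℝ := fun i j =>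
  if i + j ≤ 2*n then β i j
  else if i + j = 2*n + 1 then
    if i = 0 then ψ else if i = 1 then φ else if i = 2 then θ
    else β (i-3) (j+2) - a * β (i-2) j - b * β (i-3) j
  else 0

/-! ### Auxiliary lemmas -/

lemma symm_range_eq {ι : Type} [Fintype ι] [DecidableEq ι] (M : Matrix ι ι ℝ)
    (hM : M.IsHermitian) :
    LinearMap.range (toEuclideanLin M) = (LinearMap.ker (toEuclideanLin M))ᗮ := by
  have hsymm := Matrix.isHermitian_iff_isSymmetric.1 hM
  have hle : LinearMap.range (toEuclideanLin M) ≤ (LinearMap.ker (toEuclideanLin M))ᗮ := by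
    rintro x ⟨y, rfl⟩
    rw [Submodule.mem_orthogonal]
    intro u hu
    rw [LinearMap.mem_ker] at hu
    rw [← hsymm u y, hu, inner_zero_left]
  apply Submodule.eq_of_le_of_finrank_eq hle
  have h1 := LinearMap.finrank_range_add_finrank_ker (toEuclideanLin M)
  have h2 := Submodule.finrank_add_finrank_orthogonal
    (K := LinearMap.ker (toEuclideanLin M))
  omega

/-- constructor for indices -/
def mk (n i j : ℕ) (h : i + j ≤ n) : MIdx n :=
  ⟨(⟨i, by omega⟩, ⟨j, by omega⟩), h⟩

lemma ind_eq (n i j : ℕ) (h : i + j ≤ n) (q : MIdx n) :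
    (if (q.1.1 : ℕ) = i ∧ (q.1.2 : ℕ) = j then (1:ℝ) else 0)
      = (if q = mk n i j h then (1:ℝ) else 0) := by
  congr 1
  apply propext
  constructor
  · rintro ⟨h1, h2⟩
    apply Subtype.ext
    apply Prod.ext <;> apply Fin.ext <;> assumption
  · rintro rfl
    exact ⟨rfl, rfl⟩

lemma dot_pureVec (n : ℕ) (a b : ℝ) (i j : ℕ) (h : i + j + 3 ≤ n) (w : MIdx n → ℝ) :
    ∑ q : MIdx n, pureVec n a b i j q * w q =
      w (mk n i (j+2) (by omega)) - w (mk n (i+3) j (by omega))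
      - a * w (mk n (i+1) j (by omega)) - b * w (mk n i j (by omega)) := by
  simp only [pureVec, ind_eq n i (j+2) (by omega), ind_eq n (i+3) j (by omega),
    ind_eq n (i+1) j (by omega), ind_eq n i j (by omega)]
  simp [sub_mul, mul_ite, ite_mul, Finset.sum_sub_distrib, Finset.sum_ite_eq']

lemma ker_rel (n : ℕ) (a b : ℝ) (β : ℕ → ℕ → ℝ) (hpure : IsPPure n a b β)
    (i j : ℕ) (h : i + j + 3 ≤ n) (q : MIdx n) :
    β ((q.1.1:ℕ) + i) ((q.1.2:ℕ) + (j+2)) - β ((q.1.1:ℕ) + (i+3)) ((q.1.2:ℕ) + j)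
      - a * β ((q.1.1:ℕ) + (i+1)) ((q.1.2:ℕ) + j)
      - b * β ((q.1.1:ℕ) + i) ((q.1.2:ℕ) + j) = 0 := by
  have hmem : pureVec n a b i j ∈
      (Submodule.span ℝ {v : MIdx n → ℝ | ∃ i j : ℕ, i + j + 3 ≤ n ∧ v = pureVec n a b i j} :
        Set (MIdx n → ℝ)) := Submodule.subset_span ⟨i, j, h, rfl⟩
  rw [← hpure] at hmem
  have h0 : (momentMatrix n β).mulVec (pureVec n a b i j) q = 0 := by
    rw [hmem]; rfl
  rw [Matrix.mulVec, dotProduct] at h0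
  have h1 : ∑ r : MIdx n, momentMatrix n β q r * pureVec n a b i j r
      = ∑ r : MIdx n, pureVec n a b i j r * momentMatrix n β q r := by
    exact Finset.sum_congr rfl fun r _ => mul_comm _ _
  rw [h1, dot_pureVec n a b i j h (fun r => momentMatrix n β q r)] at h0
  exact h0

lemma ext_rel (n : ℕ) (hn : 3 ≤ n) (a b : ℝ) (β : ℕ → ℕ → ℝ) (hpure : IsPPure n a b β)
    (θ φ ψ : ℝ) (s t : ℕ) (hst : s + t = n + 1) (i j : ℕ) (h : i + j + 3 ≤ n) :
    betaExt n a b β θ φ ψ (s + i) (t + (j+2))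
      - betaExt n a b β θ φ ψ (s + (i+3)) (t + j)
      - a * betaExt n a b β θ φ ψ (s + (i+1)) (t + j)
      - b * betaExt n a b β θ φ ψ (s + i) (t + j) = 0 := by
  have e1 : betaExt n a b β θ φ ψ (s + i) (t + (j+2)) = β (s+i) (t+(j+2)) := by
    rw [betaExt, if_pos (by omega)]
  have e3 : betaExt n a b β θ φ ψ (s + (i+1)) (t + j) = β (s+(i+1)) (t+j) := by
    rw [betaExt, if_pos (by omega)]
  have e4 : betaExt n a b β θ φ ψ (s + i) (t + j) = β (s+i) (t+j) := by
    rw [betaExt, if_pos (by omega)]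
  rcases Nat.lt_or_ge (i + j + 3) n with hlt | hge
  · -- i + j + 4 ≤ n : everything in degree ≤ 2n, use kernel relations
    have e2 : betaExt n a b β θ φ ψ (s + (i+3)) (t + j) = β (s+(i+3)) (t+j) := by
      rw [betaExt, if_pos (by omega)]
    rw [e1, e2, e3, e4]
    rcases Nat.eq_zero_or_pos s with hs | hs
    · subst hs
      have := ker_rel n a b β hpure i (j+1) (by omega) (mk n 0 (n) (by omega))
      simp only [mk, Fin.val_mk] at this
      rw [show n + (j+1+2) = t + (j+2) from by omega,
        show n + (j+1) = t + j from by omega] at this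
      exact this
    · have := ker_rel n a b β hpure (i+1) j (by omega) (mk n (s-1) t (by omega))
      simp only [mk, Fin.val_mk] at this
      rw [show s-1 + (i+1) = s + i from by omega,
        show s-1 + (i+1+3) = s + (i+3) from by omega,
        show s-1 + (i+1+1) = s + (i+1) from by omega] at this
      exact this
  · -- i + j + 3 = n : the second term is a degree 2n+1 extension value
    have hn3 : i + j + 3 = n := by omega
    have e2 : betaExt n a b β θ φ ψ (s + (i+3)) (t + j)
        = β (s+(i+3)-3) (t+j+2) - a * β (s+(i+3)-2) (t+j) - b * β (s+(i+3)-3) (t+j) := by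
      rw [betaExt]
      rw [if_neg (by omega), if_pos (by omega), if_neg (by omega), if_neg (by omega),
        if_neg (by omega)]
    rw [e1, e2, e3, e4]
    have a1 : s+(i+3)-3 = s+i := by omega
    have a2 : s+(i+3)-2 = s+(i+1) := by omega
    have a3 : t+j+2 = t+(j+2) := by omega
    rw [a1, a2, a3]
    ring

set_option maxHeartbeats 1600000 in
/-- If `M(n)` is positive semidefinite and `p`-pure, then for every
`s + t = n + 1`, the column vector `C_{s,t} = (β_{s+i, t+j})_{i+j ≤ n}` of the extended
sequence lies in the column space of `M(n)`. -/
theorem extended_columns_in_columnSpace (n : ℕ) (hn : 3 ≤ n) (a b : ℝ) (β : ℕ → ℕ → ℝ)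
    (hpsd : (momentMatrix n β).PosSemidef) (hpure : IsPPure n a b β) (θ φ ψ : ℝ) :
    ∀ s t : ℕ, s + t = n + 1 →
      ∃ v : MIdx n → ℝ, (momentMatrix n β).mulVec v =
        fun q : MIdx n =>
          betaExt n a b β θ φ ψ (s + (q.1.1 : ℕ)) (t + (q.1.2 : ℕ)) := by
  intro s t hst
  have hw : ∃ w : EuclideanSpace ℝ (MIdx n),
      w = fun q : MIdx n => betaExt n a b β θ φ ψ (s + (q.1.1 : ℕ)) (t + (q.1.2 : ℕ)) :=
    ⟨WithLp.toLp 2 (fun q : MIdx n => betaExt n a b β θ φ ψ (s + (q.1.1 : ℕ)) (t + (q.1.2 : ℕ))), rfl⟩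
  obtain ⟨w, hw⟩ := hw
  have hker : ∀ u : EuclideanSpace ℝ (MIdx n),
      u ∈ LinearMap.ker (toEuclideanLin (momentMatrix n β)) → @inner ℝ _ _ u w = 0 := by
    intro u hu
    rw [LinearMap.mem_ker] at hu
    have hu' : (momentMatrix n β).mulVec u = 0 := congrArg WithLp.ofLp hu
    have humem : (u : MIdx n → ℝ) ∈
        (Submodule.span ℝ {v : MIdx n → ℝ | ∃ i j : ℕ, i + j + 3 ≤ n ∧ v = pureVec n a b i j} :
          Set (MIdx n → ℝ)) := by
      rw [← hpure]; exact hu'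
    have key : ∀ v ∈ (Submodule.span ℝ
        {v : MIdx n → ℝ | ∃ i j : ℕ, i + j + 3 ≤ n ∧ v = pureVec n a b i j}),
        ∑ q : MIdx n, v q * w q = 0 := by
      intro v hv
      induction hv using Submodule.span_induction with
      | mem x hx =>
        obtain ⟨i, j, hij, rfl⟩ := hx
        rw [dot_pureVec n a b i j hij w]
        have := ext_rel n hn a b β hpure θ φ ψ s t hst i j hij
        simpa [hw, mk] using this
      | zero => simp
      | add x y _ _ hx hy => simp [add_mul, Finset.sum_add_distrib, hx, hy]
      | smul c x _ hx =>
        simp only [Pi.smul_apply, smul_eq_mul, mul_assoc, ← Finset.mul_sum, hx, mul_zero]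
    have := key u humem
    rw [PiLp.inner_apply]
    simpa [RCLike.inner_apply, mul_comm] using this
  have hwmem : w ∈ LinearMap.range (toEuclideanLin (momentMatrix n β)) := by
    rw [symm_range_eq (momentMatrix n β) hpsd.1, Submodule.mem_orthogonal]
    exact hker
  obtain ⟨v, hv⟩ := hwmem
  exact ⟨WithLp.ofLp v, (congrArg WithLp.ofLp hv).trans hw⟩

end
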